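/- Fix ρ ∈ 𝒞 and P ∈ 𝒫^ρ_d. If P is centrally symmetric about θ_* ∈ ℝ^d, i.e. P[θ_* + B] = P[θ_* − B] for every Borel set B ⊆ ℝ^d, then MD^ρ(θ_*,P) ≥ MD^ρ(z,P) for every z ∈ ℝ^d. -/

import Mathlib

open MeasureTheory Set Filter
open scoped RealInnerProductSpace ENNReal
open scoped Topology

noncomputable section

/-- The class `𝒞` of loss functions: convex, nonnegative, even, vanishing only at `0`. -/
def LossClass (ρ : ℝ → ℝ) : Prop :=
  ConvexOn ℝ Set.univ ρ ∧ (∀ t, 0 ≤ ρ t) ∧ (∀ t, ρ (-t) = ρ t) ∧ (∀ t, ρ t = 0 ↔ t = 0)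

/-- `ψ` is the left-derivative of `ρ`. -/
def IsLeftDeriv (ρ ψ : ℝ → ℝ) : Prop :=
  ∀ x : ℝ, HasDerivWithinAt ρ (ψ x) (Set.Iio x) x

/-- `G^ρ_Q(θ) = E_Q[|ψ₋(Y−θ)|·𝟙[Y ≤ θ]] / E_Q[|ψ₋(Y−θ)|]` (equal to `0` when the
denominator vanishes, by the Lean convention for division by zero). -/
def Gfun (ψ : ℝ → ℝ) (Q : Measure ℝ) (θ : ℝ) : ℝ :=
  (∫ y, |ψ (y - θ)| * (if y ≤ θ then 1 else 0) ∂Q) / ∫ y, |ψ (y - θ)| ∂Q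

/-- The order-`α` M-quantile `θ^ρ_α(Q) = inf{θ : G^ρ_Q(θ) ≥ α}` of a law `Q` on `ℝ`. -/
def MQuant (ψ : ℝ → ℝ) (Q : Measure ℝ) (α : ℝ) : ℝ :=
  sInf {θ : ℝ | α ≤ Gfun ψ Q θ}

/-- The pushforward `P_u` of `P` under `z ↦ u'z`. -/
def dirProj {d : ℕ} (P : Measure (EuclideanSpace ℝ (Fin d)))
    (u : EuclideanSpace ℝ (Fin d)) : Measure ℝ :=
  P.map (fun z => ⟪u, z⟫)

/-- The order-`α` M-quantile halfspace `H^ρ_{α,u}(P) = {z : u'z ≥ θ^ρ_α(P_u)}`. -/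
def MHalf {d : ℕ} (ψ : ℝ → ℝ) (P : Measure (EuclideanSpace ℝ (Fin d))) (α : ℝ)
    (u : EuclideanSpace ℝ (Fin d)) : Set (EuclideanSpace ℝ (Fin d)) :=
  {z | MQuant ψ (dirProj P u) α ≤ ⟪u, z⟫}

/-- The order-`α` M-quantile hyperplane `π^ρ_{α,u}(P) = {z : u'z = θ^ρ_α(P_u)}`. -/
def MHyp {d : ℕ} (ψ : ℝ → ℝ) (P : Measure (EuclideanSpace ℝ (Fin d))) (α : ℝ)
    (u : EuclideanSpace ℝ (Fin d)) : Set (EuclideanSpace ℝ (Fin d)) :=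
  {z | ⟪u, z⟫ = MQuant ψ (dirProj P u) α}

/-- The order-`α` M-quantile region `R^ρ_α(P) = ⋂_{u ∈ S^{d−1}} H^ρ_{α,u}(P)`. -/
def MRegion {d : ℕ} (ψ : ℝ → ℝ) (P : Measure (EuclideanSpace ℝ (Fin d))) (α : ℝ) :
    Set (EuclideanSpace ℝ (Fin d)) :=
  ⋂ u ∈ {u : EuclideanSpace ℝ (Fin d) | ‖u‖ = 1}, MHalf ψ P α u

/-- The halfspace M-depth `MD^ρ(z,P) = sup{α > 0 : z ∈ R^ρ_α(P)}` (with `sup ∅ = 0`,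
which is the Lean convention for `sSup` of the empty set of reals). -/
def MDepth {d : ℕ} (ψ : ℝ → ℝ) (P : Measure (EuclideanSpace ℝ (Fin d)))
    (z : EuclideanSpace ℝ (Fin d)) : ℝ :=
  sSup {α : ℝ | α ∈ Set.Ioo (0 : ℝ) 1 ∧ z ∈ MRegion ψ P α}

/-- The C-support `C_P = {z : P[{y : u'y ≤ u'z}] > 0 for every unit u}`. -/
def Csupport {d : ℕ} (P : Measure (EuclideanSpace ℝ (Fin d))) :
    Set (EuclideanSpace ℝ (Fin d)) :=
  {z | ∀ u : EuclideanSpace ℝ (Fin d), ‖u‖ = 1 → 0 < P {y | ⟪u, y⟫ ≤ ⟪u, z⟫}}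

/-! ### Properties of the left derivative of a convex loss -/

section Psi

variable {ρ ψ : ℝ → ℝ}

lemma leftDeriv_le_slope (hρ : ConvexOn ℝ Set.univ ρ) (hψ : IsLeftDeriv ρ ψ)
    {x b : ℝ} (hb : x < b) : ψ x ≤ slope ρ x b := by
  have h : Tendsto (slope ρ x) (𝓝[Set.Iio x] x) (𝓝 (ψ x)) := by
    have := hasDerivWithinAt_iff_tendsto_slope.1 (hψ x)
    rwa [show Set.Iio x \ {x} = Set.Iio x from
      Set.diff_singleton_eq_self (fun hx => lt_irrefl x hx)] at this
  refine le_of_tendsto h ?_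
  filter_upwards [self_mem_nhdsWithin] with t ht
  exact hρ.slope_mono (mem_univ x) ⟨mem_univ t, ne_of_lt ht⟩ ⟨mem_univ b, hb.ne'⟩ (ht.le.trans hb.le)

lemma slope_le_leftDeriv (hρ : ConvexOn ℝ Set.univ ρ) (hψ : IsLeftDeriv ρ ψ)
    {a x : ℝ} (ha : a < x) : slope ρ x a ≤ ψ x := by
  have h : Tendsto (slope ρ x) (𝓝[Set.Iio x] x) (𝓝 (ψ x)) := by
    have := hasDerivWithinAt_iff_tendsto_slope.1 (hψ x)
    rwa [show Set.Iio x \ {x} = Set.Iio x from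
      Set.diff_singleton_eq_self (fun hx => lt_irrefl x hx)] at this
  refine ge_of_tendsto h ?_
  filter_upwards [self_mem_nhdsWithin,
    (eventually_gt_nhds ha).filter_mono nhdsWithin_le_nhds] with t ht hat
  exact hρ.slope_mono (mem_univ x) ⟨mem_univ a, ha.ne⟩ ⟨mem_univ t, ne_of_lt ht⟩ hat.le

lemma psi_mono (hρ : ConvexOn ℝ Set.univ ρ) (hψ : IsLeftDeriv ρ ψ) : Monotone ψ := by
  intro x y hxy
  rcases eq_or_lt_of_le hxy with rfl | h
  · exact le_rfl
  · calc ψ x ≤ slope ρ x y := leftDeriv_le_slope hρ hψ h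
    _ = slope ρ y x := slope_comm ρ x y
    _ ≤ ψ y := slope_le_leftDeriv hρ hψ h

lemma psi_pos (hρ : LossClass ρ) (hψ : IsLeftDeriv ρ ψ) {t : ℝ} (ht : 0 < t) : 0 < ψ t := by
  have h0 : ρ 0 = 0 := (hρ.2.2.2 0).2 rfl
  have hpos : 0 < ρ t := lt_of_le_of_ne (hρ.2.1 t) fun h => ht.ne' ((hρ.2.2.2 t).1 h.symm)
  have hs : slope ρ t 0 ≤ ψ t := slope_le_leftDeriv hρ.1 hψ ht
  have : slope ρ t 0 = ρ t / t := by
    rw [slope_def_field, h0, zero_sub, zero_sub, neg_div_neg_eq]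
  rw [this] at hs
  exact lt_of_lt_of_le (div_pos hpos ht) hs

lemma psi_neg (hρ : LossClass ρ) (hψ : IsLeftDeriv ρ ψ) {t : ℝ} (ht : t < 0) : ψ t < 0 := by
  have h0 : ρ 0 = 0 := (hρ.2.2.2 0).2 rfl
  have hpos : 0 < ρ t := lt_of_le_of_ne (hρ.2.1 t) fun h => ht.ne ((hρ.2.2.2 t).1 h.symm)
  have hs : ψ t ≤ slope ρ t 0 := leftDeriv_le_slope hρ.1 hψ ht
  have : slope ρ t 0 = ρ t / t := by
    rw [slope_def_field, h0, zero_sub, zero_sub, neg_div_neg_eq]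
  rw [this] at hs
  exact lt_of_le_of_lt hs (div_neg_of_pos_of_neg hpos ht)

lemma psi_zero (hρ : LossClass ρ) (hψ : IsLeftDeriv ρ ψ) : ψ 0 ≤ 0 := by
  have h : Tendsto (slope ρ 0) (𝓝[Set.Iio 0] 0) (𝓝 (ψ 0)) := by
    have := hasDerivWithinAt_iff_tendsto_slope.1 (hψ 0)
    rwa [show Set.Iio (0:ℝ) \ {0} = Set.Iio 0 from
      Set.diff_singleton_eq_self (fun hx => lt_irrefl 0 (Set.mem_Iio.1 hx))] at this
  have h0 : ρ 0 = 0 := (hρ.2.2.2 0).2 rfl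
  refine le_of_tendsto h ?_
  filter_upwards [self_mem_nhdsWithin] with t ht
  have hpos : 0 < ρ t := lt_of_le_of_ne (hρ.2.1 t) fun h => (ne_of_lt ht) ((hρ.2.2.2 t).1 h.symm)
  have : slope ρ 0 t = ρ t / t := by rw [slope_def_field, h0, sub_zero, sub_zero]
  rw [this]
  exact le_of_lt (div_neg_of_pos_of_neg hpos ht)

end Psi

/-! ### Limits of tail measures -/

lemma tendsto_meas_Iic (Q : Measure ℝ) [IsProbabilityMeasure Q] :
    Tendsto (fun r : ℝ => Q (Set.Iic r)) atBot (𝓝 0) := by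
  have h := tendsto_measure_iInter_atBot (μ := Q) (s := fun r : ℝ => Set.Iic r)
    (fun r => measurableSet_Iic.nullMeasurableSet)
    (fun a b hab => Iic_subset_Iic.2 hab) ⟨0, measure_ne_top Q _⟩
  have he : ⋂ r : ℝ, Set.Iic r = ∅ := by
    ext x
    simp only [mem_iInter, Set.mem_Iic, mem_empty_iff_false, iff_false, not_forall, not_le]
    exact ⟨x - 1, by linarith⟩
  rwa [he, measure_empty] at h

lemma tendsto_meas_Ici (Q : Measure ℝ) [IsProbabilityMeasure Q] :
    Tendsto (fun r : ℝ => Q (Set.Ici r)) atTop (𝓝 0) := by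
  have h := tendsto_measure_iInter_atTop (μ := Q) (s := fun r : ℝ => Set.Ici r)
    (fun r => measurableSet_Ici.nullMeasurableSet)
    (fun a b hab => Ici_subset_Ici.2 hab) ⟨0, measure_ne_top Q _⟩
  have he : ⋂ r : ℝ, Set.Ici r = ∅ := by
    ext x
    simp only [mem_iInter, Set.mem_Ici, mem_empty_iff_false, iff_false, not_forall, not_le]
    exact ⟨x + 1, by linarith⟩
  rwa [he, measure_empty] at h

lemma tendsto_meas_Ioi (Q : Measure ℝ) [IsProbabilityMeasure Q] :
    Tendsto (fun r : ℝ => Q (Set.Ioi r)) atTop (𝓝 0) := by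
  refine tendsto_of_tendsto_of_tendsto_of_le_of_le tendsto_const_nhds (tendsto_meas_Ici Q)
    (fun r => zero_le) (fun r => measure_mono Ioi_subset_Ici_self)

lemma exists_Ioi_pos (Q : Measure ℝ) [IsProbabilityMeasure Q] :
    ∃ r : ℝ, 0 < Q (Set.Ioi r) := by
  have := (tendsto_meas_Iic Q).eventually (gt_mem_nhds (zero_lt_one (α := ℝ≥0∞)))
  obtain ⟨r, hr⟩ := this.exists
  refine ⟨r, ?_⟩
  by_contra h
  push_neg at h
  have h0 : Q (Set.Ioi r) = 0 := le_antisymm h zero_le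
  have : (1 : ℝ≥0∞) ≤ Q (Set.Iic r) := by
    calc (1 : ℝ≥0∞) = Q Set.univ := (measure_univ (μ := Q)).symm
    _ = Q (Set.Iic r ∪ Set.Ioi r) := by rw [Iic_union_Ioi]
    _ ≤ Q (Set.Iic r) + Q (Set.Ioi r) := measure_union_le _ _
    _ = Q (Set.Iic r) := by rw [h0, add_zero]
  exact absurd hr (not_lt.2 this)

lemma exists_Iio_pos (Q : Measure ℝ) [IsProbabilityMeasure Q] :
    ∃ r : ℝ, 0 < Q (Set.Iio r) := by
  have := (tendsto_meas_Ici Q).eventually (gt_mem_nhds (zero_lt_one (α := ℝ≥0∞)))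
  obtain ⟨r, hr⟩ := this.exists
  refine ⟨r, ?_⟩
  by_contra h
  push_neg at h
  have h0 : Q (Set.Iio r) = 0 := le_antisymm h zero_le
  have : (1 : ℝ≥0∞) ≤ Q (Set.Ici r) := by
    calc (1 : ℝ≥0∞) = Q Set.univ := (measure_univ (μ := Q)).symm
    _ = Q (Set.Iio r ∪ Set.Ici r) := by rw [Iio_union_Ici]
    _ ≤ Q (Set.Iio r) + Q (Set.Ici r) := measure_union_le _ _
    _ = Q (Set.Ici r) := by rw [h0, zero_add]
  exact absurd hr (not_lt.2 this)

/-! ### The function `G` for a univariate law -/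

section Guniv

variable {ψ : ℝ → ℝ} {Q : Measure ℝ}

lemma Gfun_eq (hint : ∀ θ : ℝ, Integrable (fun t => |ψ (t - θ)|) Q) (θ : ℝ) :
    Gfun ψ Q θ = (∫ y in Set.Iic θ, |ψ (y - θ)| ∂Q) /
      ((∫ y in Set.Iic θ, |ψ (y - θ)| ∂Q) + ∫ y in Set.Ioi θ, |ψ (y - θ)| ∂Q) := by
  unfold Gfun
  have h1 : (∫ y, |ψ (y - θ)| * (if y ≤ θ then 1 else 0) ∂Q)
      = ∫ y in Set.Iic θ, |ψ (y - θ)| ∂Q := by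
    rw [← integral_indicator measurableSet_Iic]
    congr 1
    funext y
    by_cases h : y ≤ θ <;> simp [Set.indicator_apply, Set.mem_Iic, h]
  have h2 : (∫ y, |ψ (y - θ)| ∂Q)
      = (∫ y in Set.Iic θ, |ψ (y - θ)| ∂Q) + ∫ y in Set.Ioi θ, |ψ (y - θ)| ∂Q := by
    rw [← compl_Iic]
    exact (integral_add_compl measurableSet_Iic (hint θ)).symm
  rw [h1, h2]

variable [IsProbabilityMeasure Q]

/-- For small `θ`, `G(θ) < α`. -/
lemma exists_G_lt (hmono : Monotone ψ) (hpos : ∀ t : ℝ, 0 < t → 0 < ψ t) (h0 : ψ 0 ≤ 0)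
    (hint : ∀ θ : ℝ, Integrable (fun t => |ψ (t - θ)|) Q) {α : ℝ} (hα : 0 < α) :
    ∃ b : ℝ, ∀ θ ≤ b, Gfun ψ Q θ < α := by
  obtain ⟨θ0, hθ0⟩ := exists_Ioi_pos Q
  set m0 : ℝ := ∫ y in Set.Ioi θ0, |ψ (y - θ0)| ∂Q with hm0def
  have hm0 : 0 < m0 := by
    rw [hm0def, setIntegral_pos_iff_support_of_nonneg_ae
      (Eventually.of_forall fun y => abs_nonneg _) (hint θ0).integrableOn]
    refine lt_of_lt_of_le hθ0 (measure_mono fun y hy => ?_)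
    exact ⟨abs_ne_zero.2 (hpos _ (sub_pos.2 hy)).ne', hy⟩
  have hten : Tendsto (fun θ : ℝ => ∫ y in Set.Iic θ, |ψ (y - θ0)| ∂Q) atBot (𝓝 0) :=
    (hint θ0).tendsto_setIntegral_nhds_zero (tendsto_meas_Iic Q)
  have hev := hten.eventually (gt_mem_nhds (by positivity : (0:ℝ) < α * m0))
  obtain ⟨b0, hb0⟩ := eventually_atBot.1 hev
  refine ⟨min b0 θ0, fun θ hθ => ?_⟩
  have hθb : θ ≤ b0 := hθ.trans (min_le_left _ _)
  have hθ0' : θ ≤ θ0 := hθ.trans (min_le_right _ _)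
  set N : ℝ := ∫ y in Set.Iic θ, |ψ (y - θ)| ∂Q with hNdef
  set M : ℝ := ∫ y in Set.Ioi θ, |ψ (y - θ)| ∂Q with hMdef
  have hNnonneg : 0 ≤ N := setIntegral_nonneg measurableSet_Iic fun y _ => abs_nonneg _
  have hNle : N ≤ ∫ y in Set.Iic θ, |ψ (y - θ0)| ∂Q := by
    refine setIntegral_mono_on (hint θ).integrableOn (hint θ0).integrableOn
      measurableSet_Iic fun y hy => ?_
    have h1 : ψ (y - θ) ≤ 0 := le_trans (hmono (by simpa using hy : y - θ ≤ 0)) h0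
    have h2 : ψ (y - θ0) ≤ 0 := le_trans (hmono (by simp only [Set.mem_Iic] at hy; linarith :
      y - θ0 ≤ (0:ℝ))) h0
    rw [abs_of_nonpos h1, abs_of_nonpos h2]
    exact neg_le_neg (hmono (by linarith))
  have hMge : m0 ≤ M := by
    have step1 : m0 ≤ ∫ y in Set.Ioi θ0, |ψ (y - θ)| ∂Q := by
      refine setIntegral_mono_on (hint θ0).integrableOn (hint θ).integrableOn
        measurableSet_Ioi fun y hy => ?_
      have hy' : θ0 < y := hy
      have h1 : 0 < ψ (y - θ0) := hpos _ (by linarith)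
      have h2 : 0 < ψ (y - θ) := hpos _ (by linarith)
      rw [abs_of_pos h1, abs_of_pos h2]
      exact hmono (by linarith)
    refine step1.trans (setIntegral_mono_set (hint θ).integrableOn
      (Eventually.of_forall fun y => abs_nonneg _)
      (HasSubset.Subset.eventuallyLE (Ioi_subset_Ioi hθ0')))
  have hNlt : N < α * m0 := lt_of_le_of_lt hNle (hb0 θ hθb)
  have hD : 0 < N + M := by linarith
  rw [Gfun_eq hint θ, ← hNdef, ← hMdef, div_lt_iff₀ hD]
  nlinarith [mul_le_mul_of_nonneg_left hMge hα.le]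

/-- For large `θ`, `G(θ) ≥ α`. -/
lemma exists_G_ge (hmono : Monotone ψ) (hneg : ∀ t : ℝ, t < 0 → ψ t < 0)
    (hpos : ∀ t : ℝ, 0 < t → 0 < ψ t) (h0 : ψ 0 ≤ 0)
    (hint : ∀ θ : ℝ, Integrable (fun t => |ψ (t - θ)|) Q) {α : ℝ} (hα01 : α < 1) (hα : 0 < α) :
    ∃ θ : ℝ, α ≤ Gfun ψ Q θ := by
  obtain ⟨θ1, hθ1⟩ := exists_Iio_pos Q
  set n0 : ℝ := ∫ y in Set.Iio θ1, |ψ (y - θ1)| ∂Q with hn0def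
  have hn0 : 0 < n0 := by
    rw [hn0def, setIntegral_pos_iff_support_of_nonneg_ae
      (Eventually.of_forall fun y => abs_nonneg _) (hint θ1).integrableOn]
    refine lt_of_lt_of_le hθ1 (measure_mono fun y hy => ?_)
    exact ⟨abs_ne_zero.2 (hneg _ (sub_neg.2 hy)).ne, hy⟩
  have hten : Tendsto (fun θ : ℝ => ∫ y in Set.Ioi θ, |ψ (y - θ1)| ∂Q) atTop (𝓝 0) :=
    (hint θ1).tendsto_setIntegral_nhds_zero (tendsto_meas_Ioi Q)
  have hev := hten.eventually (gt_mem_nhds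
    (div_pos (mul_pos (by linarith) hn0) hα : (0:ℝ) < (1 - α) * n0 / α))
  obtain ⟨b0, hb0⟩ := eventually_atTop.1 hev
  set θ : ℝ := max b0 θ1 with hθdef
  have hθb : b0 ≤ θ := le_max_left _ _
  have hθ1' : θ1 ≤ θ := le_max_right _ _
  set N : ℝ := ∫ y in Set.Iic θ, |ψ (y - θ)| ∂Q with hNdef
  set M : ℝ := ∫ y in Set.Ioi θ, |ψ (y - θ)| ∂Q with hMdef
  have hMnonneg : 0 ≤ M := setIntegral_nonneg measurableSet_Ioi fun y _ => abs_nonneg _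
  have hNge : n0 ≤ N := by
    have step1 : n0 ≤ ∫ y in Set.Iio θ1, |ψ (y - θ)| ∂Q := by
      refine setIntegral_mono_on (hint θ1).integrableOn (hint θ).integrableOn
        measurableSet_Iio fun y hy => ?_
      have hy' : y < θ1 := hy
      have h1 : ψ (y - θ1) < 0 := hneg _ (by linarith)
      have h2 : ψ (y - θ) < 0 := hneg _ (by linarith)
      rw [abs_of_neg h1, abs_of_neg h2]
      exact neg_le_neg (hmono (by linarith))
    refine step1.trans (setIntegral_mono_set (hint θ).integrableOn
      (Eventually.of_forall fun y => abs_nonneg _)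
      (HasSubset.Subset.eventuallyLE (fun y (hy : y < θ1) => le_of_lt (lt_of_lt_of_le hy hθ1'))))
  have hMle : M ≤ ∫ y in Set.Ioi θ, |ψ (y - θ1)| ∂Q := by
    refine setIntegral_mono_on (hint θ).integrableOn (hint θ1).integrableOn
      measurableSet_Ioi fun y hy => ?_
    have hy' : θ < y := hy
    have h1 : 0 < ψ (y - θ) := hpos _ (by linarith)
    have h2 : 0 < ψ (y - θ1) := hpos _ (by linarith)
    rw [abs_of_pos h1, abs_of_pos h2]
    exact hmono (by linarith)
  have hMlt : M < (1 - α) * n0 / α := lt_of_le_of_lt hMle (hb0 θ hθb)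
  have hD : 0 < N + M := by linarith
  refine ⟨θ, ?_⟩
  rw [Gfun_eq hint θ, ← hNdef, ← hMdef, le_div_iff₀ hD]
  have keq : α * ((1 - α) * n0 / α) = (1 - α) * n0 := by field_simp
  have key : α * M < (1 - α) * n0 := (mul_lt_mul_of_pos_left hMlt hα).trans_eq keq
  nlinarith [mul_le_mul_of_nonneg_left hNge (by linarith : (0:ℝ) ≤ 1 - α), key]

end Guniv

/-! ### Translation of `Gfun` and `MQuant` -/

lemma Gfun_map_add (ψ : ℝ → ℝ) (Q : Measure ℝ) (a θ : ℝ) :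
    Gfun ψ (Q.map (fun x => x + a)) θ = Gfun ψ Q (θ - a) := by
  have e : ℝ ≃ᵐ ℝ := (Homeomorph.addRight a).toMeasurableEquiv
  have hQ : Q.map (fun x => x + a) = Q.map ((Homeomorph.addRight a).toMeasurableEquiv) := rfl
  unfold Gfun
  rw [hQ, integral_map_equiv, integral_map_equiv]
  have h1 : ∀ x : ℝ, ((Homeomorph.addRight a).toMeasurableEquiv : ℝ → ℝ) x = x + a :=
    fun x => rfl
  congr 1
  · refine integral_congr_ae (Eventually.of_forall fun x => ?_)
    simp only [h1]
    have hx : x + a - θ = x - (θ - a) := by ring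
    rw [hx]
    by_cases h : x + a ≤ θ
    · rw [if_pos h, if_pos (by linarith : x ≤ θ - a)]
    · rw [if_neg h, if_neg (fun hcon => h (by linarith))]
  · refine integral_congr_ae (Eventually.of_forall fun x => ?_)
    simp only [h1]
    have hx : x + a - θ = x - (θ - a) := by ring
    rw [hx]

lemma MQuant_map_add (ψ : ℝ → ℝ) (Q : Measure ℝ) (a α : ℝ)
    (hne : {θ : ℝ | α ≤ Gfun ψ Q θ}.Nonempty)
    (hbdd : BddBelow {θ : ℝ | α ≤ Gfun ψ Q θ}) :
    MQuant ψ (Q.map (fun x => x + a)) α = MQuant ψ Q α + a := by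
  unfold MQuant
  have hset : {θ : ℝ | α ≤ Gfun ψ (Q.map (fun x => x + a)) θ}
      = (OrderIso.addRight a) '' {θ : ℝ | α ≤ Gfun ψ Q θ} := by
    ext θ
    simp only [Set.mem_setOf_eq, Set.mem_image, OrderIso.addRight_apply, Gfun_map_add]
    constructor
    · intro h
      exact ⟨θ - a, h, by ring⟩
    · rintro ⟨x, hx, rfl⟩
      simpa using hx
  rw [hset, ← OrderIso.map_csInf' (OrderIso.addRight a) hne hbdd]
  rfl

/-! ### Symmetry -/

section Symm

variable {d : ℕ}

local notation "E" => EuclideanSpace ℝ (Fin d)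

lemma inner_measurable (u : E) : Measurable fun z : E => ⟪u, z⟫ :=
  (continuous_const.inner continuous_id).measurable

lemma map_refl (P : Measure E) (θs : E)
    (hsym : ∀ B : Set E, MeasurableSet B →
      P ((fun x => θs + x) '' B) = P ((fun x => θs - x) '' B)) :
    P.map (fun x : E => θs - (x - θs)) = P := by
  set r : E → E := fun x => θs - (x - θs) with hrdef
  have hr : Measurable r := by
    refine (measurable_const.sub (measurable_id.sub measurable_const))
  have hinv : Function.Involutive r := by
    intro x
    simp only [hrdef]
    abel
  refine Measure.ext fun A hA => ?_
  rw [Measure.map_apply hr hA]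
  have hBmeas : MeasurableSet ((fun x : E => x - θs) '' A) := by
    have : (fun x : E => x - θs) '' A = (fun x : E => x + θs) ⁻¹' A := by
      ext y
      simp only [Set.mem_image, Set.mem_preimage]
      constructor
      · rintro ⟨x, hx, rfl⟩
        simpa [sub_add_cancel] using hx
      · intro hy
        exact ⟨y + θs, hy, by abel⟩
    rw [this]
    exact (measurable_id.add_const θs) hA
  have key := hsym _ hBmeas
  have h1 : (fun x : E => θs + x) '' ((fun x : E => x - θs) '' A) = A := by
    rw [← Set.image_comp]
    have : ((fun x : E => θs + x) ∘ fun x : E => x - θs) = id := by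
      funext x; simp only [Function.comp_apply, id_eq]; abel
    rw [this, Set.image_id]
  have h2 : (fun x : E => θs - x) '' ((fun x : E => x - θs) '' A) = r '' A := by
    rw [← Set.image_comp]
    congr 1
  have h3 : r '' A = r ⁻¹' A := by
    ext x
    simp only [Set.mem_image, Set.mem_preimage]
    constructor
    · rintro ⟨y, hy, rfl⟩
      rwa [hinv y]
    · intro hx
      exact ⟨r x, hx, hinv x⟩
  rw [h1, h2, h3] at key
  exact key.symm

lemma dirProj_neg (P : Measure E) (θs : E)
    (hsym : ∀ B : Set E, MeasurableSet B →
      P ((fun x => θs + x) '' B) = P ((fun x => θs - x) '' B)) (u : E) :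
    dirProj P (-u) = (dirProj P u).map (fun t => t + -(2 * ⟪u, θs⟫)) := by
  have hr : Measurable (fun x : E => θs - (x - θs)) :=
    measurable_const.sub (measurable_id.sub measurable_const)
  unfold dirProj
  conv_lhs => rw [← map_refl P θs hsym]
  have hg : Measurable fun t : ℝ => t + -(2 * ⟪u, θs⟫) := by fun_prop
  rw [Measure.map_map (inner_measurable (-u)) hr,
    Measure.map_map hg (inner_measurable u)]
  congr 1
  funext z
  simp only [Function.comp_apply, inner_neg_left, inner_sub_right, id_eq]
  ring

end Symm

theorem stmt_9 {d : ℕ} (hd : 0 < d) (ρ ψ : ℝ → ℝ) (hρ : LossClass ρ)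
    (hψ : IsLeftDeriv ρ ψ)
    (P : Measure (EuclideanSpace ℝ (Fin d))) [IsProbabilityMeasure P]
    (hP1 : ∀ u : EuclideanSpace ℝ (Fin d), ‖u‖ = 1 → ∀ c : ℝ, P {z | ⟪u, z⟫ = c} < 1)
    (hP2 : ∀ u : EuclideanSpace ℝ (Fin d), ‖u‖ = 1 → ∀ θ : ℝ,
      Integrable (fun t => |ψ (t - θ)|) (dirProj P u))
    (θs : EuclideanSpace ℝ (Fin d))
    (hsym : ∀ B : Set (EuclideanSpace ℝ (Fin d)), MeasurableSet B →
      P ((fun x => θs + x) '' B) = P ((fun x => θs - x) '' B)) :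
    ∀ z : EuclideanSpace ℝ (Fin d), MDepth ψ P z ≤ MDepth ψ P θs := by
  have hmono : Monotone ψ := psi_mono hρ.1 hψ
  have hneg : ∀ t : ℝ, t < 0 → ψ t < 0 := fun t ht => psi_neg hρ hψ ht
  have hpos : ∀ t : ℝ, 0 < t → 0 < ψ t := fun t ht => psi_pos hρ hψ ht
  have h0 : ψ 0 ≤ 0 := psi_zero hρ hψ
  intro z
  refine Real.sSup_le (fun α hα => ?_) (Real.sSup_nonneg fun x hx => hx.1.1.le)
  obtain ⟨⟨hα0, hα1⟩, hz⟩ := hα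
  have hmain : θs ∈ MRegion ψ P α := by
    rw [MRegion, mem_iInter₂]
    intro u hu
    have hu' : ‖u‖ = 1 := hu
    have hnu : ‖-u‖ = 1 := by rwa [norm_neg]
    -- the projected measure
    have hprob : IsProbabilityMeasure (dirProj P u) :=
      Measure.isProbabilityMeasure_map (inner_measurable u).aemeasurable
    have hint := hP2 u hu'
    -- nonemptiness and boundedness of the quantile set
    obtain ⟨θe, hθe⟩ := exists_G_ge (Q := dirProj P u) hmono hneg hpos h0 hint hα1 hα0
    obtain ⟨b, hb⟩ := exists_G_lt (Q := dirProj P u) hmono hpos h0 hint hα0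
    have hne : {θ : ℝ | α ≤ Gfun ψ (dirProj P u) θ}.Nonempty := ⟨θe, hθe⟩
    have hbdd : BddBelow {θ : ℝ | α ≤ Gfun ψ (dirProj P u) θ} := by
      refine ⟨b, fun θ hθ => ?_⟩
      by_contra hcon
      push_neg at hcon
      exact absurd hθ (not_le.2 (hb θ hcon.le))
    -- membership of z in the two halfspaces
    have hzu : MQuant ψ (dirProj P u) α ≤ ⟪u, z⟫ := by
      have := mem_iInter₂.1 hz u hu'
      exact this
    have hznu : MQuant ψ (dirProj P (-u)) α ≤ ⟪-u, z⟫ := by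
      have := mem_iInter₂.1 hz (-u) hnu
      exact this
    -- rewrite the M-quantile in direction -u
    rw [dirProj_neg P θs hsym u,
      MQuant_map_add ψ (dirProj P u) _ α hne hbdd, inner_neg_left] at hznu
    show MQuant ψ (dirProj P u) α ≤ ⟪u, θs⟫
    linarith
  refine le_csSup ⟨1, fun x hx => hx.1.2.le⟩ ⟨⟨hα0, hα1⟩, hmain⟩

end
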